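/- Let n ≥ 2 and x, y ∈ ℤⁿ. Define I(x,y) := I(x₁,y₁) × ⋯ × I(xₙ,yₙ), where I(s,t) = [min(s,t), max(s,t)] ⊆ ℤ. If S ⊆ ℤⁿ is connected in the grid graph Gₙ and closed under completing 4-cycles (whenever three vertices of a 4-cycle of Gₙ are in S, so is the fourth), then for all x, y ∈ S, the discrete box I(x,y) is contained in S. -/
import Mathlib

/-- `d` is one of the `2n` unit directions `±eᵢ` of `ℤⁿ`. -/
def IsUnitDir (n : ℕ) (d : Fin n → ℤ) : Prop :=
  ∃ i : Fin n, d = Pi.single i 1 ∨ d = -Pi.single i 1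

lemma isUnitDir_single {n : ℕ} (i : Fin n) (ε : ℤ) (hε : ε = 1 ∨ ε = -1) :
    IsUnitDir n (Pi.single i ε) := by
  refine ⟨i, ?_⟩
  rcases hε with h | h
  · left; rw [h]
  · right
    ext k
    by_cases hk : k = i <;> simp [Pi.single_apply, hk, h]

lemma unit_step {n : ℕ} {x y : Fin n → ℤ} (h : (∑ i, |x i - y i|) = 1) :
    ∃ (i : Fin n) (ε : ℤ), (ε = 1 ∨ ε = -1) ∧ y = x + Pi.single i ε := by
  have hne : ∃ i, x i ≠ y i := by
    by_contra hc
    push_neg at hc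
    simp [hc] at h
  obtain ⟨i, hi⟩ := hne
  have hle : |x i - y i| ≤ ∑ k, |x k - y k| :=
    Finset.single_le_sum (f := fun k => |x k - y k|) (fun k _ => abs_nonneg _) (Finset.mem_univ i)
  have hpos : 1 ≤ |x i - y i| := by
    rcases abs_cases (x i - y i) with ⟨h1, _⟩ | ⟨h1, _⟩ <;> omega
  have habs : |x i - y i| = 1 := by omega
  have hsum := Finset.add_sum_erase Finset.univ (fun k => |x k - y k|) (Finset.mem_univ i)
  simp only [h, habs] at hsum
  have hzero : ∀ k ∈ Finset.univ.erase i, |x k - y k| = 0 := by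
    rw [← Finset.sum_eq_zero_iff_of_nonneg (fun k _ => abs_nonneg _)]
    omega
  refine ⟨i, y i - x i, ?_, ?_⟩
  · rcases abs_cases (x i - y i) with ⟨h1, _⟩ | ⟨h1, _⟩ <;> omega
  · funext k
    by_cases hk : k = i
    · subst hk; simp [Pi.single_apply]
    · have := hzero k (Finset.mem_erase.2 ⟨hk, Finset.mem_univ k⟩)
      have hxy : x k = y k := by
        rcases abs_cases (x k - y k) with ⟨h1, _⟩ | ⟨h1, _⟩ <;> omega
      simp [Pi.single_apply, hk, hxy]

section

variable {n : ℕ} {S : Set (Fin n → ℤ)}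
variable (hconv : ∀ (x d d' : Fin n → ℤ), IsUnitDir n d → IsUnitDir n d' →
      d ≠ d' → d ≠ -d' → x ∈ S → x + d ∈ S → x + d' ∈ S → x + d + d' ∈ S)

include hconv

/-- Face filling: if the box `[b,y]` is in `S` and the point `b - ε eᵢ` is in `S`, then the
whole face layer `{z : z i = b i - ε, z j ∈ [b j, y j] for j ≠ i}` is in `S`. -/
lemma face_fill (b y : Fin n → ℤ) (i : Fin n) (ε : ℤ) (hε : ε = 1 ∨ ε = -1)
    (hbox : ∀ w : Fin n → ℤ, (∀ k, min (b k) (y k) ≤ w k ∧ w k ≤ max (b k) (y k)) → w ∈ S)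
    (ha : b - Pi.single i ε ∈ S) :
    ∀ z : Fin n → ℤ, z i = b i - ε →
      (∀ j, j ≠ i → min (b j) (y j) ≤ z j ∧ z j ≤ max (b j) (y j)) → z ∈ S := by
  intro z
  generalize hN : (∑ j, (z j - b j).natAbs) = N
  induction N using Nat.strong_induction_on generalizing z with
  | _ N ih =>
  intro hzi hzface
  by_cases hzb : ∀ j, z j = b j - (Pi.single i ε : Fin n → ℤ) j
  · have : z = b - Pi.single i ε := funext fun j => by rw [hzb j]; rfl
    rwa [this]
  · push_neg at hzb
    obtain ⟨j, hj⟩ := hzb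
    have hji : j ≠ i := by
      intro hji; rw [hji] at hj
      exact hj (by simp [hzi])
    have hjb : z j ≠ b j := by
      intro hc; exact hj (by simp [Pi.single_apply, hji, hc])
    have hjbox := hzface j hji
    have hbj1 : min (b j) (y j) ≤ b j := min_le_left _ _
    have hbj2 : b j ≤ max (b j) (y j) := le_max_left _ _
    obtain ⟨δ, hδ, hdec, hlo, hhi⟩ :
        ∃ δ : ℤ, (δ = 1 ∨ δ = -1) ∧ (z j + δ - b j).natAbs < (z j - b j).natAbs ∧
          min (b j) (y j) ≤ z j + δ ∧ z j + δ ≤ max (b j) (y j) := by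
      rcases lt_or_gt_of_ne hjb with hlt | hgt
      · exact ⟨1, Or.inl rfl, by omega, by omega, by omega⟩
      · exact ⟨-1, Or.inr rfl, by omega, by omega, by omega⟩
    set z' : Fin n → ℤ := z + Pi.single j δ with hz'def
    have hz'j : z' j = z j + δ := by simp [hz'def]
    have hz'k : ∀ k, k ≠ j → z' k = z k := by
      intro k hk; simp [hz'def, Pi.single_apply, hk]
    have hsum' : (∑ k, (z' k - b k).natAbs) < N := by
      rw [← hN]
      refine Finset.sum_lt_sum ?_ ⟨j, Finset.mem_univ j, ?_⟩
      · intro k _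
        by_cases hk : k = j
        · rw [hk, hz'j]; omega
        · rw [hz'k k hk]
      · rw [hz'j]; omega
    have hz'i : z' i = b i - ε := by rw [hz'k i (Ne.symm hji), hzi]
    have hz'face : ∀ k, k ≠ i → min (b k) (y k) ≤ z' k ∧ z' k ≤ max (b k) (y k) := by
      intro k hk
      by_cases hkj : k = j
      · rw [hkj, hz'j]; exact ⟨hlo, hhi⟩
      · rw [hz'k k hkj]; exact hzface k hk
    have hz'S : z' ∈ S := ih _ hsum' _ rfl hz'i hz'face
    have hwi : ((z' + Pi.single i ε : Fin n → ℤ)) i = b i := by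
      simp [Pi.single_apply, hz'i]
    have hwS : z' + Pi.single i ε ∈ S := by
      apply hbox
      intro k
      by_cases hk : k = i
      · rw [hk, hwi]; exact ⟨min_le_left _ _, le_max_left _ _⟩
      · have h1 : ((z' + Pi.single i ε : Fin n → ℤ)) k = z' k := by
          simp [Pi.single_apply, hk]
        rw [h1]; exact hz'face k hk
    have hvi : ((z + Pi.single i ε : Fin n → ℤ)) i = b i := by
      simp [Pi.single_apply, hzi]
    have hvS : z + Pi.single i ε ∈ S := by
      apply hbox
      intro k
      by_cases hk : k = i
      · rw [hk, hvi]; exact ⟨min_le_left _ _, le_max_left _ _⟩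
      · have h1 : ((z + Pi.single i ε : Fin n → ℤ)) k = z k := by
          simp [Pi.single_apply, hk]
        rw [h1]; exact hzface k hk
    have hεne : ε ≠ 0 := by rcases hε with h | h <;> simp [h]
    have hδne : δ ≠ 0 := by rcases hδ with h | h <;> simp [h]
    have hne1 : (Pi.single i (-ε) : Fin n → ℤ) ≠ Pi.single j (-δ) := by
      intro hc
      have := congrFun hc i
      simp [Pi.single_apply, Ne.symm hji] at this
      exact hεne (by omega)
    have hne2 : (Pi.single i (-ε) : Fin n → ℤ) ≠ -Pi.single j (-δ) := by
      intro hc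
      have := congrFun hc i
      simp [Pi.single_apply, Ne.symm hji] at this
      exact hεne (by omega)
    have heq1 : z' + Pi.single i ε + Pi.single i (-ε) = z' := by
      funext k
      by_cases hk : k = i
      · rw [hk]; simp [Pi.single_apply]
      · simp [Pi.single_apply, hk]
    have heq2 : z' + Pi.single i ε + Pi.single j (-δ) = z + Pi.single i ε := by
      funext k
      by_cases hk : k = j
      · rw [hk]
        simp only [Pi.add_apply]
        rw [hz'j]
        simp [Pi.single_apply, hji]
      · simp only [Pi.add_apply]
        rw [hz'k k hk]
        simp [Pi.single_apply, hk]
    have key := hconv (z' + Pi.single i ε) (Pi.single i (-ε)) (Pi.single j (-δ))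
      (isUnitDir_single i (-ε) (by omega)) (isUnitDir_single j (-δ) (by omega))
      hne1 hne2 hwS (by rwa [heq1]) (by rwa [heq2])
    have heq3 : z' + Pi.single i ε + Pi.single i (-ε) + Pi.single j (-δ) = z := by
      rw [heq1]
      funext k
      by_cases hk : k = j
      · rw [hk]; simp only [Pi.add_apply]; rw [hz'j]; simp [Pi.single_apply]
      · simp only [Pi.add_apply]
        rw [hz'k k hk]
        simp [Pi.single_apply, hk]
    rwa [heq3] at key

/-- Sliding: if the box `[b,y]` is in `S` and `a = b + ε eᵢ ∈ S`, then the box `[a,y]` is in `S`. -/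
lemma slide (b y a : Fin n → ℤ) (i : Fin n) (ε : ℤ) (hε : ε = 1 ∨ ε = -1)
    (hbox : ∀ w : Fin n → ℤ, (∀ k, min (b k) (y k) ≤ w k ∧ w k ≤ max (b k) (y k)) → w ∈ S)
    (hab : a = b + Pi.single i ε) (haS : a ∈ S) :
    ∀ z : Fin n → ℤ, (∀ k, min (a k) (y k) ≤ z k ∧ z k ≤ max (a k) (y k)) → z ∈ S := by
  intro z hz
  have hai : a i = b i + ε := by rw [hab]; simp [Pi.single_apply]
  have hak : ∀ k, k ≠ i → a k = b k := by
    intro k hk; rw [hab]; simp [Pi.single_apply, hk]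
  by_cases hcase : min (b i) (y i) ≤ z i ∧ z i ≤ max (b i) (y i)
  · apply hbox
    intro k
    by_cases hk : k = i
    · subst hk; exact hcase
    · have := hz k; rw [hak k hk] at this; exact this
  · have hzi : z i = b i + ε := by
      have := hz i; rw [hai] at this; omega
    refine face_fill hconv b y i (-ε) (by omega) hbox ?_ z (by omega) ?_
    · have : b - Pi.single i (-ε) = a := by
        funext k; by_cases hk : k = i
        · subst hk; simp [Pi.single_apply, hai]
        · simp [Pi.single_apply, hk, hak k hk]
      rwa [this]
    · intro k hk
      have := hz k; rw [hak k hk] at this; exact this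

lemma path_box :
    ∀ (ℓ : ℕ) (p : ℕ → Fin n → ℤ),
      (∀ j < ℓ, (∑ i, |p j i - p (j + 1) i|) = 1) → (∀ j ≤ ℓ, p j ∈ S) →
      ∀ z : Fin n → ℤ,
        (∀ k, min (p 0 k) (p ℓ k) ≤ z k ∧ z k ≤ max (p 0 k) (p ℓ k)) → z ∈ S := by
  intro ℓ
  induction ℓ with
  | zero =>
    intro p _ hmem z hz
    have : z = p 0 := funext fun k => by have := hz k; omega
    rw [this]; exact hmem 0 le_rfl
  | succ ℓ ih =>
    intro p hstep hmem z hz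
    have hboxtail := ih (fun j => p (j + 1)) (fun j hj => hstep (j + 1) (by omega))
      (fun j hj => hmem (j + 1) (by omega))
    have h01 : (∑ i, |p 1 i - p 0 i|) = 1 := by
      rw [← hstep 0 (by omega)]
      exact Finset.sum_congr rfl fun k _ => abs_sub_comm _ _
    obtain ⟨i, ε, hε, hstep01⟩ := unit_step h01
    exact slide hconv (p 1) (p (ℓ + 1)) (p 0) i ε hε hboxtail hstep01 (hmem 0 (by omega)) z hz

end

/-- If `S ⊆ ℤⁿ` (`n ≥ 2`) is connected in the grid graph and closed under
completing 4-cycles, then for all `x, y ∈ S` the discrete box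
`I(x,y) = ∏ᵢ [min(xᵢ,yᵢ), max(xᵢ,yᵢ)]` is contained in `S`. -/
theorem stmt9 (n : ℕ) (hn : 2 ≤ n) (S : Set (Fin n → ℤ))
    (hconn : ∀ x ∈ S, ∀ y ∈ S, ∃ (ℓ : ℕ) (p : ℕ → Fin n → ℤ),
      p 0 = x ∧ p ℓ = y ∧ (∀ j < ℓ, (∑ i, |p j i - p (j + 1) i|) = 1) ∧ ∀ j ≤ ℓ, p j ∈ S)
    (hconv : ∀ (x d d' : Fin n → ℤ), IsUnitDir n d → IsUnitDir n d' →
      d ≠ d' → d ≠ -d' → x ∈ S → x + d ∈ S → x + d' ∈ S → x + d + d' ∈ S) :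
    ∀ x ∈ S, ∀ y ∈ S,
      {z : Fin n → ℤ | ∀ i, min (x i) (y i) ≤ z i ∧ z i ≤ max (x i) (y i)} ⊆ S := by
  intro x hx y hy z hz
  obtain ⟨ℓ, p, hp0, hpl, hstep, hmem⟩ := hconn x hx y hy
  exact path_box hconv ℓ p hstep hmem z (by rw [hp0, hpl]; exact hz)
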